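/- Fix T > 0 and x₀, x_T ∈ ℝ. Among all three-times continuously differentiable functions x : [0,T] → ℝ satisfying x(0) = x₀, x(T) = x_T, x'(0) = x'(T) = 0 and x''(0) = x''(T) = 0, the functional J(x) = ∫₀ᵀ x'''(t)² dt is minimized by the quintic polynomial x(t) = x₀ + (x_T − x₀)·(10·(t/T)³ − 15·(t/T)⁴ + 6·(t/T)⁵); that is, J of this quintic is less than or equal to J(x) for every such x. -/

import Mathlib

set_option linter.unnecessarySeqFocus false
set_option maxHeartbeats 1000000

lemma poly5 (c0 c1 c2 c3 c4 c5 t : ℝ) :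
    HasDerivAt (fun t => c0 + c1*t + c2*t^2 + c3*t^3 + c4*t^4 + c5*t^5)
      (c1 + 2*c2*t + 3*c3*t^2 + 4*c4*t^3 + 5*c5*t^4) t := by
  have h := (((((hasDerivAt_const t c0).add ((hasDerivAt_id t).const_mul c1)).add
      ((hasDerivAt_pow 2 t).const_mul c2)).add
      ((hasDerivAt_pow 3 t).const_mul c3)).add
      ((hasDerivAt_pow 4 t).const_mul c4)).add
      ((hasDerivAt_pow 5 t).const_mul c5)
  exact h.congr_deriv (by push_cast; ring)

theorem stmt_15 (T x₀ xT : ℝ) (hT : 0 < T)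
    (q : ℝ → ℝ)
    (hq : q = fun t =>
      x₀ + (xT - x₀) * (10 * (t / T) ^ 3 - 15 * (t / T) ^ 4 + 6 * (t / T) ^ 5)) :
    ∀ x : ℝ → ℝ, ContDiff ℝ 3 x →
      x 0 = x₀ → x T = xT →
      deriv x 0 = 0 → deriv x T = 0 →
      deriv (deriv x) 0 = 0 → deriv (deriv x) T = 0 →
      (∫ t in (0 : ℝ)..T, deriv (deriv (deriv q)) t ^ 2)
        ≤ ∫ t in (0 : ℝ)..T, deriv (deriv (deriv x)) t ^ 2 := by
  intro x hx hx0 hxT hx'0 hx'T hx''0 hx''T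
  have hT0 : T ≠ 0 := hT.ne'
  set a : ℝ := xT - x₀ with ha
  set c3 : ℝ := a * 10 / T ^ 3 with hc3
  set c4 : ℝ := -(a * 15) / T ^ 4 with hc4
  set c5 : ℝ := a * 6 / T ^ 5 with hc5
  -- rewrite q as a polynomial
  have hqpoly : q = fun t => x₀ + 0*t + 0*t^2 + c3 * t ^ 3 + c4 * t ^ 4 + c5 * t ^ 5 := by
    rw [hq]; funext t; rw [hc3, hc4, hc5]; field_simp; ring
  -- derivative functions of q
  set q1 : ℝ → ℝ := fun t => 3*c3*t^2 + 4*c4*t^3 + 5*c5*t^4 with hq1def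
  set q2 : ℝ → ℝ := fun t => 6*c3*t + 12*c4*t^2 + 20*c5*t^3 with hq2def
  set q3 : ℝ → ℝ := fun t => 6*c3 + 24*c4*t + 60*c5*t^2 with hq3def
  set q4 : ℝ → ℝ := fun t => 24*c4 + 120*c5*t with hq4def
  have Hq : ∀ t, HasDerivAt q (q1 t) t := by
    intro t
    rw [hqpoly]
    have h := poly5 x₀ 0 0 c3 c4 c5 t
    convert h using 1
    rw [hq1def]; ring
  have Hq1 : ∀ t, HasDerivAt q1 (q2 t) t := by
    intro t
    have h := poly5 0 0 (3*c3) (4*c4) (5*c5) 0 t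
    have hfn : q1 = fun s => 0 + 0*s + (3*c3)*s^2 + (4*c4)*s^3 + (5*c5)*s^4 + 0*s^5 := by
      funext s; rw [hq1def]; ring
    rw [hfn]
    convert h using 1
    rw [hq2def]; push_cast; ring
  have Hq2 : ∀ t, HasDerivAt q2 (q3 t) t := by
    intro t
    have h := poly5 0 (6*c3) (12*c4) (20*c5) 0 0 t
    have hfn : q2 = fun s => 0 + (6*c3)*s + (12*c4)*s^2 + (20*c5)*s^3 + 0*s^4 + 0*s^5 := by
      funext s; rw [hq2def]; ring
    rw [hfn]
    convert h using 1
    rw [hq3def]; push_cast; ring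
  have Hq3 : ∀ t, HasDerivAt q3 (q4 t) t := by
    intro t
    have h := poly5 (6*c3) (24*c4) (60*c5) 0 0 0 t
    have hfn : q3 = fun s => (6*c3) + (24*c4)*s + (60*c5)*s^2 + 0*s^3 + 0*s^4 + 0*s^5 := by
      funext s; rw [hq3def]; ring
    rw [hfn]
    convert h using 1
    rw [hq4def]; push_cast; ring
  have Hq4 : ∀ t, HasDerivAt q4 (120*c5) t := by
    intro t
    have h := ((hasDerivAt_const t (24*c4)).add ((hasDerivAt_id t).const_mul (120*c5)))
    rw [hq4def]
    exact h.congr_deriv (by ring)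
  -- deriv equalities for q
  have hdq : deriv q = q1 := funext fun t => (Hq t).deriv
  have hdq1 : deriv q1 = q2 := funext fun t => (Hq1 t).deriv
  have hdq2 : deriv q2 = q3 := funext fun t => (Hq2 t).deriv
  -- smoothness of x
  have hx3 : ContDiff ℝ ((2:ℕ∞) + 1 : WithTop ℕ∞) x := by exact_mod_cast hx
  obtain ⟨hdx, -, hx2⟩ := contDiff_succ_iff_deriv.mp hx3
  have hx2' : ContDiff ℝ ((1:ℕ∞) + 1 : WithTop ℕ∞) (deriv x) := by exact_mod_cast hx2
  obtain ⟨hdx1, -, hx1⟩ := contDiff_succ_iff_deriv.mp hx2'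
  have hx1' : ContDiff ℝ ((0:ℕ∞) + 1 : WithTop ℕ∞) (deriv (deriv x)) := by exact_mod_cast hx1
  obtain ⟨hdx2, -, hxc0⟩ := contDiff_succ_iff_deriv.mp hx1'
  have hcont3 : Continuous (deriv (deriv (deriv x))) := hxc0.continuous
  -- the perturbation g
  set g : ℝ → ℝ := fun t => x t - q t with hgdef
  set g1 : ℝ → ℝ := fun t => deriv x t - q1 t with hg1def
  set g2 : ℝ → ℝ := fun t => deriv (deriv x) t - q2 t with hg2def
  set g3 : ℝ → ℝ := fun t => deriv (deriv (deriv x)) t - q3 t with hg3def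
  have Hg : ∀ t, HasDerivAt g (g1 t) t := fun t => ((hdx t).hasDerivAt).sub (Hq t)
  have Hg1 : ∀ t, HasDerivAt g1 (g2 t) t := fun t => ((hdx1 t).hasDerivAt).sub (Hq1 t)
  have Hg2 : ∀ t, HasDerivAt g2 (g3 t) t := fun t => ((hdx2 t).hasDerivAt).sub (Hq2 t)
  -- fun_prop
  have hcq1 : Continuous q1 := by rw [hq1def]; fun_prop
  have hcq2 : Continuous q2 := by rw [hq2def]; fun_prop
  have hcq3 : Continuous q3 := by rw [hq3def]; fun_prop
  have hcq4 : Continuous q4 := by rw [hq4def]; fun_prop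
  have hcg1 : Continuous g1 := by rw [hg1def]; exact hdx1.continuous.sub hcq1
  have hcg2 : Continuous g2 := by rw [hg2def]; exact hdx2.continuous.sub hcq2
  have hcg3 : Continuous g3 := by rw [hg3def]; exact hcont3.sub hcq3
  -- boundary values
  have hq1T : q1 T = 0 := by rw [hq1def]; rw [hc3, hc4, hc5]; field_simp; ring
  have hq2T : q2 T = 0 := by rw [hq2def]; rw [hc3, hc4, hc5]; field_simp; ring
  have hq10 : q1 0 = 0 := by rw [hq1def]; ring
  have hq20 : q2 0 = 0 := by rw [hq2def]; ring
  have hg10 : g1 0 = 0 := by rw [hg1def]; simp [hx'0, hq10]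
  have hg1T : g1 T = 0 := by rw [hg1def]; simp [hx'T, hq1T]
  have hg20 : g2 0 = 0 := by rw [hg2def]; simp [hx''0, hq20]
  have hg2T : g2 T = 0 := by rw [hg2def]; simp [hx''T, hq2T]
  have hgq0 : q 0 = x₀ := by rw [hqpoly]; ring
  have hgqT : q T = xT := by rw [hqpoly]; rw [hc3, hc4, hc5, ha]; field_simp; ring
  have hg0 : g 0 = 0 := by rw [hgdef]; simp [hx0, hgq0]
  have hgT : g T = 0 := by rw [hgdef]; simp [hxT, hgqT]
  -- integration by parts
  have I1 : ∫ t in (0:ℝ)..T, q3 t * g3 t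
      = q3 T * g2 T - q3 0 * g2 0 - ∫ t in (0:ℝ)..T, q4 t * g2 t :=
    intervalIntegral.integral_mul_deriv_eq_deriv_mul (fun t _ => Hq3 t) (fun t _ => Hg2 t)
      (hcq4.intervalIntegrable 0 T) (hcg3.intervalIntegrable 0 T)
  have I2 : ∫ t in (0:ℝ)..T, q4 t * g2 t
      = q4 T * g1 T - q4 0 * g1 0 - ∫ t in (0:ℝ)..T, (120*c5) * g1 t :=
    intervalIntegral.integral_mul_deriv_eq_deriv_mul (fun t _ => Hq4 t) (fun t _ => Hg1 t)
      ((continuous_const : Continuous fun _:ℝ => 120*c5).intervalIntegrable 0 T)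
      (hcg2.intervalIntegrable 0 T)
  have I3 : ∫ t in (0:ℝ)..T, g1 t = g T - g 0 :=
    intervalIntegral.integral_eq_sub_of_hasDerivAt (fun t _ => Hg t)
      (hcg1.intervalIntegrable 0 T)
  have cross : ∫ t in (0:ℝ)..T, q3 t * g3 t = 0 := by
    rw [I1, I2, intervalIntegral.integral_const_mul, I3, hg10, hg1T, hg20, hg2T, hg0, hgT]
    ring
  -- assemble
  have hderivq3 : deriv (deriv (deriv q)) = q3 := by rw [hdq, hdq1, hdq2]
  have hsplit : (fun t => deriv (deriv (deriv x)) t ^ 2)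
      = fun t => q3 t ^ 2 + (2*(q3 t * g3 t) + g3 t ^ 2) := by
    funext t
    have : deriv (deriv (deriv x)) t = q3 t + g3 t := by rw [hg3def]; ring
    rw [this]; ring
  have hint1 : IntervalIntegrable (fun t => q3 t ^ 2) MeasureTheory.volume 0 T :=
    (hcq3.pow 2).intervalIntegrable 0 T
  have hint2 : IntervalIntegrable (fun t => 2*(q3 t * g3 t)) MeasureTheory.volume 0 T :=
    (continuous_const.mul (hcq3.mul hcg3)).intervalIntegrable 0 T
  have hint3 : IntervalIntegrable (fun t => g3 t ^ 2) MeasureTheory.volume 0 T :=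
    (hcg3.pow 2).intervalIntegrable 0 T
  have key : ∫ t in (0:ℝ)..T, deriv (deriv (deriv x)) t ^ 2
      = (∫ t in (0:ℝ)..T, q3 t ^ 2) + (2 * ∫ t in (0:ℝ)..T, q3 t * g3 t)
        + ∫ t in (0:ℝ)..T, g3 t ^ 2 := by
    rw [hsplit, intervalIntegral.integral_add hint1 (hint2.add hint3),
      intervalIntegral.integral_add hint2 hint3, intervalIntegral.integral_const_mul]
    ring
  have hg3nonneg : 0 ≤ ∫ t in (0:ℝ)..T, g3 t ^ 2 :=
    intervalIntegral.integral_nonneg hT.le (fun t _ => sq_nonneg _)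
  rw [hderivq3, key, cross]
  linarith
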